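/- Let D ⊆ ℂ be a domain with #(ℂ \ D) < 2n for some n ≥ 2. Then S_n(D) contains a non-constant holomorphic image of ℂ, hence S_n(D) is not Kobayashi hyperbolic. -/

import Mathlib

/-- The symmetrization map `π_n : ℂ^n → ℂ^n`, whose `j`-th coordinate is the
`(j+1)`-st elementary symmetric polynomial of the entries. -/
noncomputable def symPoly (n : ℕ) (lam : Fin n → ℂ) : Fin n → ℂ :=
  fun j => ∑ t ∈ Finset.powersetCard ((j : ℕ) + 1) Finset.univ, ∏ i ∈ t, lam i

/-- The `n`-fold symmetric product `S_n(D) = π_n(D^n)` of a planar set `D`. -/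
noncomputable def symProd (n : ℕ) (D : Set ℂ) : Set (Fin n → ℂ) :=
  symPoly n '' {lam | ∀ i, lam i ∈ D}


open scoped ENNReal

/-- The Poincaré distance on the unit disc `𝔻 ⊆ ℂ`. -/
noncomputable def poincareDist (a b : ℂ) : ℝ :=
  let ρ := ‖(a - b) / (1 - (starRingEnd ℂ) a * b)‖
  (1 / 2) * Real.log ((1 + ρ) / (1 - ρ))

/-- The Lempert function of `Ω ⊆ E`, defined via analytic discs in `Ω`. -/
noncomputable def lempert (E : Type*) [NormedAddCommGroup E] [NormedSpace ℂ E]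
    (Ω : Set E) (w z : E) : ℝ≥0∞ :=
  ⨅ d : {d : (ℂ → E) × ℂ //
      DifferentiableOn ℂ d.1 (Metric.ball 0 1) ∧
      Set.MapsTo d.1 (Metric.ball 0 1) Ω ∧
      d.1 0 = w ∧ d.2 ∈ Metric.ball (0 : ℂ) 1 ∧ d.1 d.2 = z},
    ENNReal.ofReal (poincareDist 0 d.1.2)

/-- The Kobayashi pseudodistance of `Ω ⊆ E`: the largest pseudodistance
dominated by the Lempert function, obtained by chaining analytic discs. -/
noncomputable def kobayashi (E : Type*) [NormedAddCommGroup E] [NormedSpace ℂ E]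
    (Ω : Set E) (w z : E) : ℝ≥0∞ :=
  ⨅ c : {c : Σ m : ℕ, Fin (m + 1) → E //
      c.2 0 = w ∧ c.2 (Fin.last c.1) = z ∧ ∀ i, c.2 i ∈ Ω},
    ∑ i : Fin c.1.1, lempert E Ω (c.1.2 i.castSucc) (c.1.2 i.succ)

/-! Auxiliary lemmas -/

lemma multiset_exists_fn (s : Multiset ℂ) {n : ℕ} (h : Multiset.card s = n) :
    ∃ lam : Fin n → ℂ, Finset.univ.val.map lam = s := by
  subst h
  refine ⟨fun i => s.toList.get (Fin.cast (Multiset.length_toList s).symm i), ?_⟩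
  rw [Fin.univ_val_map]
  have : List.ofFn (fun i => s.toList.get (Fin.cast (Multiset.length_toList s).symm i))
      = s.toList := by
    apply List.ext_get <;> simp
  rw [this, Multiset.coe_toList]

/-- A monic polynomial of degree `n` over `ℂ` whose roots all lie in `D`
yields a point of `symProd n D` via Vieta. -/
lemma aux_roots {n : ℕ} (D : Set ℂ) (P : Polynomial ℂ) (hm : P.Monic)
    (hd : P.natDegree = n) (hroot : ∀ r : ℂ, P.IsRoot r → r ∈ D) :
    (fun j : Fin n => (-1 : ℂ) ^ ((j : ℕ) + 1) * P.coeff (n - 1 - (j : ℕ)))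
      ∈ symProd n D := by
  have hsplit : P.Splits := IsAlgClosed.splits P
  have hcard : Multiset.card P.roots = n :=
    (Polynomial.splits_iff_card_roots.mp hsplit).trans hd
  obtain ⟨lam, hlam⟩ := multiset_exists_fn P.roots hcard
  refine ⟨lam, fun i => ?_, ?_⟩
  · apply hroot
    apply Polynomial.isRoot_of_mem_roots
    rw [← hlam]
    exact Multiset.mem_map_of_mem _ (Finset.mem_univ i)
  · funext j
    have hjn : (j : ℕ) < n := j.isLt
    have h1 : symPoly n lam j = P.roots.esymm ((j : ℕ) + 1) := by
      rw [symPoly, ← hlam, Finset.esymm_map_val]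
    have h2 := Polynomial.coeff_eq_esymm_roots_of_splits hsplit
      (k := n - 1 - (j : ℕ)) (by omega)
    rw [hd] at h2
    have he : n - (n - 1 - (j : ℕ)) = (j : ℕ) + 1 := by omega
    rw [he, hm.leadingCoeff, one_mul] at h2
    have hsq : ((-1 : ℂ) ^ ((j : ℕ) + 1)) * ((-1 : ℂ) ^ ((j : ℕ) + 1)) = 1 := by
      rw [← pow_add]
      exact Even.neg_one_pow ⟨(j : ℕ) + 1, by ring⟩
    rw [h1, h2]
    rw [← mul_assoc, hsq, one_mul]

/-- Construction of the non-constant entire curve into `symProd n D`. -/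
lemma exists_entire_curve (n : ℕ) (hn : 1 ≤ n) (D : Set ℂ) (hfin : Set.Finite Dᶜ)
    (hcard : hfin.toFinset.card ≤ 2 * n - 1) :
    ∃ f : ℂ → (Fin n → ℂ), Differentiable ℂ f ∧
      (¬ ∃ c, f = fun _ => c) ∧ Set.range f ⊆ symProd n D := by
  classical
  set Tf : Finset ℂ := hfin.toFinset with hTf
  set m : ℕ := Tf.card with hm
  set k : ℕ := min m n with hk
  obtain ⟨T1, hT1sub, hT1card⟩ := Finset.exists_subset_card_eq (min_le_left m n)
  set T2 : Finset ℂ := Tf \ T1 with hT2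
  have hT2card : T2.card = m - k := by rw [hT2, Finset.card_sdiff_of_subset hT1sub, hT1card]
  have hT2le : T2.card ≤ n - 1 := by rw [hT2card]; omega
  set Q1 : Polynomial ℂ := ∏ t ∈ T1, (Polynomial.X - Polynomial.C t) with hQ1
  set Q2 : Polynomial ℂ := ∏ t ∈ T2, (Polynomial.X - Polynomial.C t) with hQ2
  set A : Polynomial ℂ := Q1 * Polynomial.X ^ (n - k) with hA
  have hQ1m : Q1.Monic := Polynomial.monic_prod_of_monic _ _
    (fun t _ => Polynomial.monic_X_sub_C t)
  have hQ2m : Q2.Monic := Polynomial.monic_prod_of_monic _ _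
    (fun t _ => Polynomial.monic_X_sub_C t)
  have hQ1deg : Q1.natDegree = k := by
    rw [hQ1, Polynomial.natDegree_prod _ _
      (fun t _ => (Polynomial.monic_X_sub_C t).ne_zero)]
    simp [hT1card, hk]
  have hQ2deg : Q2.natDegree = T2.card := by
    rw [hQ2, Polynomial.natDegree_prod _ _
      (fun t _ => (Polynomial.monic_X_sub_C t).ne_zero)]
    simp
  have hAm : A.Monic := hQ1m.mul (Polynomial.monic_X_pow _)
  have hAdeg : A.natDegree = n := by
    rw [hA, Polynomial.natDegree_mul hQ1m.ne_zero (Polynomial.monic_X_pow _).ne_zero,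
      hQ1deg, Polynomial.natDegree_X_pow]
    omega
  -- degree bound for the perturbation
  have hlt : ∀ e : ℂ, (Polynomial.C e * Q2).degree < A.degree := by
    intro e
    have h1 : (Polynomial.C e * Q2).degree ≤ Q2.degree :=
      le_trans (Polynomial.degree_mul_le _ _)
        (by simpa using add_le_add Polynomial.degree_C_le (le_refl Q2.degree))
    have h2 : Q2.degree ≤ (T2.card : WithBot ℕ) := by
      rw [← hQ2deg]; exact Polynomial.degree_le_natDegree
    have h3 : ((T2.card : ℕ) : WithBot ℕ) < (n : WithBot ℕ) :=
      Nat.cast_lt.mpr (by omega)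
    have h4 : A.degree = (n : WithBot ℕ) := by
      rw [Polynomial.degree_eq_natDegree hAm.ne_zero, hAdeg]
    exact lt_of_le_of_lt (le_trans h1 h2) (by rw [h4]; exact h3)
  -- the polynomial family
  set P : ℂ → Polynomial ℂ := fun z => A + Polynomial.C (Complex.exp z) * Q2 with hP
  have hPm : ∀ z, (P z).Monic := fun z => hAm.add_of_left (hlt _)
  have hPdeg : ∀ z, (P z).natDegree = n := by
    intro z
    rw [hP]
    have := Polynomial.natDegree_eq_of_degree_eq
      (Polynomial.degree_add_eq_left_of_degree_lt (hlt (Complex.exp z)))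
    rw [this, hAdeg]
  -- evaluation at points of the complement is nonzero
  have heval : ∀ z : ℂ, ∀ t ∈ Tf, (P z).eval t ≠ 0 := by
    intro z t ht
    have hev : (P z).eval t
        = (∏ s ∈ T1, (t - s)) * t ^ (n - k)
          + Complex.exp z * ∏ s ∈ T2, (t - s) := by
      simp [hP, hA, hQ1, hQ2, Polynomial.eval_prod]
    by_cases ht1 : t ∈ T1
    · have h0 : (∏ s ∈ T1, (t - s)) = 0 :=
        Finset.prod_eq_zero ht1 (by ring)
      have h2 : (∏ s ∈ T2, (t - s)) ≠ 0 := by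
        rw [Finset.prod_ne_zero_iff]
        intro s hs
        have : s ∉ T1 := (Finset.mem_sdiff.mp hs).2
        intro hts
        exact this (by rw [← sub_eq_zero.mp hts]; exact ht1)
      rw [hev, h0, zero_mul, zero_add]
      exact mul_ne_zero (Complex.exp_ne_zero z) h2
    · have ht2 : t ∈ T2 := Finset.mem_sdiff.mpr ⟨ht, ht1⟩
      have h0 : (∏ s ∈ T2, (t - s)) = 0 :=
        Finset.prod_eq_zero ht2 (by ring)
      have h1 : (∏ s ∈ T1, (t - s)) ≠ 0 := by
        rw [Finset.prod_ne_zero_iff]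
        intro s hs hts
        exact ht1 (by rw [sub_eq_zero.mp hts]; exact hs)
      have hkn : k = n := by
        have hpos : 1 ≤ T2.card := Finset.card_pos.mpr ⟨t, ht2⟩
        have h5 : k ≤ m := min_le_left m n
        have h6 : k ≤ n := min_le_right m n
        rcases Nat.lt_or_ge k m with h | h
        · omega
        · exfalso; omega
      rw [hev, h0, mul_zero, add_zero, hkn, Nat.sub_self, pow_zero, mul_one]
      exact h1
  -- the curve
  set b : Fin n → ℂ := fun j => Q2.coeff (n - 1 - (j : ℕ)) with hb
  set a : Fin n → ℂ := fun j => A.coeff (n - 1 - (j : ℕ)) with ha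
  set f : ℂ → Fin n → ℂ :=
    fun z j => (-1 : ℂ) ^ ((j : ℕ) + 1) * (a j + Complex.exp z * b j) with hf
  have hcoeff : ∀ z : ℂ, ∀ j : Fin n,
      f z j = (-1 : ℂ) ^ ((j : ℕ) + 1) * (P z).coeff (n - 1 - (j : ℕ)) := by
    intro z j
    simp [hf, hP, Polynomial.coeff_add, Polynomial.coeff_C_mul, ha, hb]
  refine ⟨f, ?_, ?_, ?_⟩
  · rw [differentiable_pi]
    intro j
    exact (differentiable_const _).mul
      ((differentiable_const _).add (Complex.differentiable_exp.mul (differentiable_const _)))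
  · rintro ⟨c, hc⟩
    have hjlt : n - 1 - T2.card < n := by omega
    set j0 : Fin n := ⟨n - 1 - T2.card, hjlt⟩ with hj0
    have hbj : b j0 = 1 := by
      have : n - 1 - (n - 1 - T2.card) = T2.card := by omega
      rw [hb]
      simp only [hj0]
      rw [this, ← hQ2deg]
      exact hQ2m.coeff_natDegree
    have e1 : f 0 j0 = c j0 := by rw [hc]
    have e2 : f (Real.pi * Complex.I) j0 = c j0 := by rw [hc]
    rw [← e2] at e1
    simp only [hf, Complex.exp_zero, Complex.exp_pi_mul_I, hbj] at e1
    have hne : ((-1 : ℂ)) ^ ((j0 : ℕ) + 1) ≠ 0 := by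
      apply pow_ne_zero; norm_num
    have h9 := mul_left_cancel₀ hne e1
    have h10 : (1 : ℂ) = -1 := by
      have := add_left_cancel h9
      simpa using this
    norm_num at h10
  · rintro v ⟨z, rfl⟩
    have hroot : ∀ r : ℂ, (P z).IsRoot r → r ∈ D := by
      intro r hr
      by_contra hrD
      have : r ∈ Tf := by rw [hTf, Set.Finite.mem_toFinset]; exact hrD
      exact heval z r this hr
    have := aux_roots D (P z) (hPm z) (hPdeg z) hroot
    convert this using 1
    funext j
    exact hcoeff z j

/-- Along a non-constant entire curve in `Ω`, the Kobayashi pseudodistance vanishes. -/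
lemma kobayashi_eq_zero_of_entire {E : Type*} [NormedAddCommGroup E] [NormedSpace ℂ E]
    (Ω : Set E) (f : ℂ → E) (hf : Differentiable ℂ f)
    (hrange : Set.range f ⊆ Ω) (z₁ : ℂ) :
    kobayashi E Ω (f 0) (f z₁) = 0 := by
  refine le_antisymm ?_ zero_le
  apply ENNReal.le_of_forall_pos_le_add
  intro ε hε _
  rw [zero_add]
  -- choose a small radius ρ
  set ρ : ℝ := min ((ε : ℝ) / 4) (1 / 2) with hρdef
  have hρpos : 0 < ρ := lt_min (by positivity) (by norm_num)
  have hρle : ρ ≤ 1 / 2 := min_le_right _ _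
  have hρeps : 2 * ρ ≤ (ε : ℝ) := by
    have := min_le_left ((ε : ℝ) / 4) (1 / 2)
    nlinarith
  -- the analytic disc
  set d : (ℂ → E) × ℂ := (fun w => f (w * (z₁ / (ρ : ℂ))), (ρ : ℂ)) with hd
  have hdmem : DifferentiableOn ℂ d.1 (Metric.ball 0 1) ∧
      Set.MapsTo d.1 (Metric.ball 0 1) Ω ∧
      d.1 0 = f 0 ∧ d.2 ∈ Metric.ball (0 : ℂ) 1 ∧ d.1 d.2 = f z₁ := by
    refine ⟨?_, ?_, ?_, ?_, ?_⟩
    · exact (hf.comp (differentiable_id.mul (differentiable_const _))).differentiableOn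
    · intro w _
      exact hrange (Set.mem_range_self _)
    · simp [hd]
    · simp only [hd, Metric.mem_ball, dist_zero_right]
      rw [Complex.norm_real, Real.norm_eq_abs, abs_of_pos hρpos]
      linarith
    · have hρne : (ρ : ℂ) ≠ 0 := by
        exact_mod_cast ne_of_gt hρpos
      simp only [hd]
      rw [mul_div_assoc', mul_comm, mul_div_assoc, div_self hρne, mul_one]
  -- the Lempert function is small
  have hlem : lempert E Ω (f 0) (f z₁) ≤ ENNReal.ofReal (poincareDist 0 d.2) :=
    iInf_le (fun d : {d : (ℂ → E) × ℂ //
      DifferentiableOn ℂ d.1 (Metric.ball 0 1) ∧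
      Set.MapsTo d.1 (Metric.ball 0 1) Ω ∧
      d.1 0 = f 0 ∧ d.2 ∈ Metric.ball (0 : ℂ) 1 ∧ d.1 d.2 = f z₁} =>
      ENNReal.ofReal (poincareDist 0 d.1.2)) ⟨d, hdmem⟩
  -- estimate the Poincaré distance
  have hpoin : poincareDist 0 d.2 ≤ 2 * ρ := by
    have habs : ‖(0 - (ρ : ℂ)) / (1 - (starRingEnd ℂ) 0 * (ρ : ℂ))‖ = ρ := by
      simp [Complex.norm_real, abs_of_pos hρpos]
    rw [poincareDist]
    rw [show d.2 = (ρ : ℂ) from rfl, habs]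
    have h1 : (0 : ℝ) < 1 - ρ := by linarith
    have h2 : (0 : ℝ) < (1 + ρ) / (1 - ρ) := by positivity
    have h3 : Real.log ((1 + ρ) / (1 - ρ)) ≤ (1 + ρ) / (1 - ρ) - 1 :=
      Real.log_le_sub_one_of_pos h2
    have h4 : (1 + ρ) / (1 - ρ) - 1 = 2 * ρ / (1 - ρ) := by
      field_simp; ring
    have h5 : 2 * ρ / (1 - ρ) ≤ 4 * ρ := by
      rw [div_le_iff₀ h1]; nlinarith
    nlinarith
  -- chain of length one bounds kobayashi by lempert
  have hchain : kobayashi E Ω (f 0) (f z₁) ≤ lempert E Ω (f 0) (f z₁) := by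
    have hmem : (![f 0, f z₁] : Fin 2 → E) 0 = f 0 ∧
        (![f 0, f z₁] : Fin 2 → E) (Fin.last 1) = f z₁ ∧
        ∀ i, (![f 0, f z₁] : Fin 2 → E) i ∈ Ω := by
      refine ⟨rfl, rfl, ?_⟩
      intro i
      fin_cases i
      · exact hrange (Set.mem_range_self 0)
      · exact hrange (Set.mem_range_self z₁)
    have := iInf_le (fun c : {c : Σ m : ℕ, Fin (m + 1) → E //
        c.2 0 = f 0 ∧ c.2 (Fin.last c.1) = f z₁ ∧ ∀ i, c.2 i ∈ Ω} =>
        ∑ i : Fin c.1.1, lempert E Ω (c.1.2 i.castSucc) (c.1.2 i.succ))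
      ⟨⟨1, ![f 0, f z₁]⟩, hmem⟩
    rw [kobayashi]
    refine le_trans this ?_
    rw [Finset.sum_eq_single (0 : Fin 1) (by simp) (by simp)]
    simp
  refine le_trans hchain (le_trans hlem ?_)
  refine le_trans (ENNReal.ofReal_le_ofReal hpoin) ?_
  calc ENNReal.ofReal (2 * ρ) ≤ ENNReal.ofReal (ε : ℝ) :=
        ENNReal.ofReal_le_ofReal hρeps
    _ = (ε : ℝ≥0∞) := ENNReal.ofReal_coe_nnreal


/-- If `D ⊆ ℂ` is a domain whose complement has fewer than `2n` points
(`n ≥ 2`), then `S_n(D)` contains a non-constant holomorphic image of `ℂ`,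
hence `S_n(D)` is not Kobayashi hyperbolic. -/
theorem symProd_not_kobayashi_hyperbolic (n : ℕ) (hn : 2 ≤ n) (D : Set ℂ)
    (hDopen : IsOpen D) (hDconn : IsConnected D)
    (hcard : Set.encard Dᶜ < 2 * n) :
    (∃ f : ℂ → (Fin n → ℂ), Differentiable ℂ f ∧
      (¬ ∃ c, f = fun _ => c) ∧ Set.range f ⊆ symProd n D) ∧
    ¬ (∀ p ∈ symProd n D, ∀ q ∈ symProd n D, p ≠ q →
        0 < kobayashi (Fin n → ℂ) (symProd n D) p q) := by
  have hfin : Dᶜ.Finite := by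
    rw [← Set.encard_lt_top_iff]
    exact lt_of_lt_of_le hcard le_top
  have hm : hfin.toFinset.card ≤ 2 * n - 1 := by
    have h1 : Set.encard Dᶜ = (hfin.toFinset.card : ℕ∞) := by
      rw [Set.Finite.encard_eq_coe_toFinset_card]
    rw [h1] at hcard
    have h2 : ((hfin.toFinset.card : ℕ) : ℕ∞) < ((2 * n : ℕ) : ℕ∞) := by
      exact_mod_cast hcard
    have := Nat.cast_lt.mp h2
    omega
  obtain ⟨f, hdiff, hnc, hrange⟩ := exists_entire_curve n (by omega) D hfin hm
  refine ⟨⟨f, hdiff, hnc, hrange⟩, ?_⟩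
  intro hpos
  have hz₁ : ∃ z₁ : ℂ, f z₁ ≠ f 0 := by
    by_contra h
    push_neg at h
    exact hnc ⟨f 0, funext h⟩
  obtain ⟨z₁, hz₁⟩ := hz₁
  have h0 : f 0 ∈ symProd n D := hrange (Set.mem_range_self 0)
  have h1 : f z₁ ∈ symProd n D := hrange (Set.mem_range_self z₁)
  have := hpos (f 0) h0 (f z₁) h1 (Ne.symm hz₁)
  rw [kobayashi_eq_zero_of_entire (symProd n D) f hdiff hrange z₁] at this
  exact lt_irrefl 0 this
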